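/- Let D be a digraph, Z ⊆ V(D), D′ the torso of D on V(D) \ Z (arc uv iff there is a Z-walk from u to v), and A′_i the lifted terminal-arc sets. If X ⊆ V(D) \ Z is such that no closed walk in D − X contains arcs from two distinct sets A_i, A_j, then no closed walk in D′ − X contains arcs from two distinct sets A′_i, A′_j. -/

import Mathlib

/-- Reachability by directed walks in a digraph given by its arc relation. -/
def Reach {V : Type*} (E : V → V → Prop) : V → V → Prop := Relation.ReflTransGen E

/-- The digraph obtained by deleting the vertex set `X` (induced subgraph on the complement). -/
def Del {V : Type*} (E : V → V → Prop) (X : Set V) : V → V → Prop :=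
  fun u v => E u v ∧ u ∉ X ∧ v ∉ X

/-- Two vertices are strongly connected (in the same strongly connected component). -/
def SCC {V : Type*} (E : V → V → Prop) (u v : V) : Prop := Reach E u v ∧ Reach E v u

/-- A closed directed walk, given as the list of visited vertices (first = last). -/
def ClosedWalk {V : Type*} (E : V → V → Prop) (l : List V) : Prop :=
  l.Chain' E ∧ 2 ≤ l.length ∧ l.head? = l.getLast?

/-- The walk `l` traverses an arc from the arc set `A`. -/
def ContainsArc {V : Type*} (A : V → V → Prop) (l : List V) : Prop :=
  ∃ l₁ a b l₂, l = l₁ ++ a :: b :: l₂ ∧ A a b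

/-- A `Z`-walk from `u` to `v`: a directed walk with endpoints `u, v ∉ Z`
and all internal vertices in `Z`. -/
def ZWalk {V : Type*} (E : V → V → Prop) (Z : Set V) (u v : V) (l : List V) : Prop :=
  l.Chain' E ∧ 2 ≤ l.length ∧ l.head? = some u ∧ l.getLast? = some v ∧
  u ∉ Z ∧ v ∉ Z ∧ ∀ x ∈ (l.drop 1).dropLast, x ∈ Z

section TorsoAux

variable {V : Type*}

lemma chain'_del {E : V → V → Prop} {X : Set V} {w : List V}
    (hc : w.Chain' E) (hx : ∀ x ∈ w, x ∉ X) : w.Chain' (Del E X) := by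
  induction w with
  | nil => simp [List.Chain']
  | cons a t ih =>
    rcases t with _ | ⟨b, t⟩
    · simp [List.Chain']
    · simp only [List.Chain', List.isChain_cons_cons] at hc ⊢
      exact ⟨⟨hc.1, hx a (by simp), hx b (by simp)⟩,
        ih hc.2 (fun x hxm => hx x (List.mem_cons_of_mem _ hxm))⟩

lemma zwalk_del {E : V → V → Prop} {Z X : Set V} (hXZ : Disjoint X Z) {u v : V} {w : List V}
    (hw : ZWalk E Z u v w) (hu : u ∉ X) (hv : v ∉ X) : w.Chain' (Del E X) := by
  obtain ⟨hc, hlen, hhead, hlast, _, _, hint⟩ := hw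
  refine chain'_del hc ?_
  cases w with
  | nil => simp at hhead
  | cons a t =>
    simp only [List.head?_cons, Option.some.injEq] at hhead
    subst hhead
    rcases List.eq_nil_or_concat t with rfl | ⟨s, c, rfl⟩
    · simp at hlen
    · simp only [List.concat_eq_append] at hlast hint ⊢
      have hcv : c = v := by
        rw [show a :: (s ++ [c]) = (a :: s) ++ [c] by simp, List.getLast?_concat] at hlast
        exact Option.some.inj hlast
      subst hcv
      have hintZ : ∀ x ∈ s, x ∈ Z := by
        simpa only [List.drop_succ_cons, List.drop_zero, List.dropLast_concat] using hint
      intro x hx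
      rcases (by simpa using hx : x = a ∨ x ∈ s ∨ x = c) with rfl | hxs | rfl
      · exact hu
      · exact fun hX => Set.disjoint_left.mp hXZ hX (hintZ x hxs)
      · exact hv

lemma containsArc_append_right {A : V → V → Prop} {m t : List V}
    (h : ContainsArc A m) : ContainsArc A (m ++ t) := by
  obtain ⟨l₁, a, b, l₂, rfl, hab⟩ := h
  exact ⟨l₁, a, b, l₂ ++ t, by simp, hab⟩

lemma containsArc_cons_append {A : V → V → Prop} {m n' : List V} {v : V}
    (hlast : m.getLast? = some v) (h : ContainsArc A (v :: n')) : ContainsArc A (m ++ n') := by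
  obtain ⟨l₁, a, b, l₂, heq, hab⟩ := h
  have hm : m ≠ [] := by rintro rfl; simp at hlast
  cases l₁ with
  | nil =>
    simp only [List.nil_append, List.cons.injEq] at heq
    obtain ⟨rfl, rfl⟩ := heq
    refine ⟨m.dropLast, v, b, l₂, ?_, hab⟩
    have hgl : m.getLast hm = v := by
      rw [List.getLast?_eq_getLast hm] at hlast
      exact Option.some.inj hlast
    have h1 : m.dropLast ++ [v] = m := by
      rw [← hgl]; exact List.dropLast_append_getLast hm
    calc m ++ b :: l₂ = (m.dropLast ++ [v]) ++ b :: l₂ := by rw [h1]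
      _ = m.dropLast ++ v :: b :: l₂ := by simp
  | cons c l₁' =>
    simp only [List.cons_append, List.cons.injEq] at heq
    obtain ⟨rfl, rfl⟩ := heq
    exact ⟨m ++ l₁', a, b, l₂, by simp, hab⟩

lemma chain'_glue {R : V → V → Prop} {m n' : List V} {v : V}
    (hm : m.Chain' R) (hn : (v :: n').Chain' R) (hlast : m.getLast? = some v) :
    (m ++ n').Chain' R := by
  simp only [List.Chain', List.isChain_append]
  refine ⟨hm, (List.isChain_cons.mp hn).2, ?_⟩
  intro x hx y hy
  rw [hlast] at hx
  simp only [Option.mem_def, Option.some.injEq] at hx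
  subst hx
  exact (List.isChain_cons.mp hn).1 y hy

lemma head?_glue {m n' : List V} (hm : m ≠ []) : (m ++ n').head? = m.head? := by
  cases m with
  | nil => exact absurd rfl hm
  | cons a t => simp

lemma getLast?_glue {m n' : List V} {v : V} (hlast : m.getLast? = some v) :
    (m ++ n').getLast? = (v :: n').getLast? := by
  cases n' with
  | nil => simpa using hlast
  | cons d t =>
    rw [List.getLast?_append, List.getLast?_cons_cons]
    cases h : (d :: t).getLast? with
    | none => simp at h
    | some z => simp

variable {E E' : V → V → Prop} {Z X : Set V}

lemma expand_walk (hXZ : Disjoint X Z) (hE' : ∀ u v, E' u v → ∃ l, ZWalk E Z u v l) :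
    ∀ (l : List V) (u v : V), l.Chain' (Del E' X) → l.head? = some u → l.getLast? = some v →
      ∃ m : List V, m.Chain' (Del E X) ∧ m.head? = some u ∧ m.getLast? = some v := by
  intro l
  induction l with
  | nil => intro u v _ hh _; simp at hh
  | cons a t ih =>
    intro u v hc hh hl
    cases t with
    | nil =>
      exact ⟨[a], by simp [List.Chain'], hh, hl⟩
    | cons b t' =>
      simp only [List.head?_cons, Option.some.injEq] at hh
      simp only [List.Chain', List.isChain_cons_cons] at hc
      obtain ⟨⟨hab, haX, hbX⟩, hc'⟩ := hc
      obtain ⟨w, hw⟩ := hE' _ _ hab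
      have hwc : w.Chain' (Del E X) := zwalk_del hXZ hw haX hbX
      have hwh : w.head? = some u := hh ▸ hw.2.2.1
      have hwl : w.getLast? = some b := hw.2.2.2.1
      rw [List.getLast?_cons_cons] at hl
      obtain ⟨m, hmc, hmh, hml⟩ := ih b v hc' rfl hl
      obtain ⟨tm, rfl⟩ : ∃ tm, m = b :: tm := by
        cases m with
        | nil => simp at hmh
        | cons c tm =>
          simp only [List.head?_cons, Option.some.injEq] at hmh
          exact ⟨tm, by rw [hmh]⟩
      refine ⟨w ++ tm, chain'_glue hwc hmc hwl, ?_, ?_⟩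
      · rw [head?_glue (by rintro rfl; simp at hwh)]; exact hwh
      · rw [getLast?_glue hwl]; exact hml

lemma expand_walk_arc (hXZ : Disjoint X Z) (hE' : ∀ u v, E' u v → ∃ l, ZWalk E Z u v l)
    {A A'' : V → V → Prop}
    (hA'' : ∀ u v, A'' u v → ∃ l, ZWalk E Z u v l ∧ ContainsArc A l) :
    ∀ (l₁ : List V) (a b : V) (l₂ : List V) (u v : V),
      (l₁ ++ a :: b :: l₂).Chain' (Del E' X) →
      (l₁ ++ a :: b :: l₂).head? = some u → (l₁ ++ a :: b :: l₂).getLast? = some v →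
      A'' a b →
      ∃ m : List V, m.Chain' (Del E X) ∧ m.head? = some u ∧ m.getLast? = some v ∧ ContainsArc A m := by
  intro l₁
  induction l₁ with
  | nil =>
    intro a b l₂ u v hc hh hl hab
    simp only [List.nil_append] at hc hh hl
    simp only [List.head?_cons, Option.some.injEq] at hh
    simp only [List.Chain', List.isChain_cons_cons] at hc
    obtain ⟨⟨_, haX, hbX⟩, hc'⟩ := hc
    obtain ⟨w, hw, hwarc⟩ := hA'' _ _ hab
    have hwc : w.Chain' (Del E X) := zwalk_del hXZ hw haX hbX
    have hwh : w.head? = some u := hh ▸ hw.2.2.1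
    have hwl : w.getLast? = some b := hw.2.2.2.1
    rw [List.getLast?_cons_cons] at hl
    obtain ⟨m, hmc, hmh, hml⟩ := expand_walk hXZ hE' (b :: l₂) b v hc' rfl hl
    obtain ⟨tm, rfl⟩ : ∃ tm, m = b :: tm := by
      cases m with
      | nil => simp at hmh
      | cons c tm =>
        simp only [List.head?_cons, Option.some.injEq] at hmh
        exact ⟨tm, by rw [hmh]⟩
    refine ⟨w ++ tm, chain'_glue hwc hmc hwl, ?_, ?_, containsArc_append_right hwarc⟩
    · rw [head?_glue (by rintro rfl; simp at hwh)]; exact hwh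
    · rw [getLast?_glue hwl]; exact hml
  | cons c l₁' ih =>
    intro a b l₂ u v hc hh hl hab
    rw [List.cons_append] at hc hh hl
    simp only [List.head?_cons, Option.some.injEq] at hh
    obtain ⟨d, r, hr⟩ : ∃ d r, l₁' ++ a :: b :: l₂ = d :: r := by
      cases l₁' <;> exact ⟨_, _, rfl⟩
    rw [hr] at hc; simp only [List.Chain', List.isChain_cons_cons] at hc
    obtain ⟨⟨hud, huX, hdX⟩, hc'⟩ := hc
    obtain ⟨w, hw⟩ := hE' _ _ hud
    have hwc : w.Chain' (Del E X) := zwalk_del hXZ hw huX hdX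
    have hwh : w.head? = some u := hh ▸ hw.2.2.1
    have hwl : w.getLast? = some d := hw.2.2.2.1
    rw [hr, List.getLast?_cons_cons] at hl
    obtain ⟨m, hmc, hmh, hml, hmarc⟩ := ih a b l₂ d v
      (by rw [hr]; exact hc') (by rw [hr]; rfl) (by rw [hr]; exact hl) hab
    obtain ⟨tm, rfl⟩ : ∃ tm, m = d :: tm := by
      cases m with
      | nil => simp at hmh
      | cons e tm =>
        simp only [List.head?_cons, Option.some.injEq] at hmh
        exact ⟨tm, by rw [hmh]⟩
    refine ⟨w ++ tm, chain'_glue hwc hmc hwl, ?_, ?_, containsArc_cons_append hwl hmarc⟩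
    · rw [head?_glue (by rintro rfl; simp at hwh)]; exact hwh
    · rw [getLast?_glue hwl]; exact hml

lemma containsArc_two_le_length {A : V → V → Prop} {m : List V}
    (h : ContainsArc A m) : 2 ≤ m.length := by
  obtain ⟨l₁, a, b, l₂, rfl, _⟩ := h
  simp; omega

end TorsoAux

/-- If no closed walk in `D − X` contains arcs from two distinct terminal-arc sets `A i`,
`A j`, then no closed walk in the torso `D' − X` contains arcs from two distinct lifted
sets `A' i`, `A' j`. -/
theorem torso_solution {V ι : Type*} (E : V → V → Prop) (Z X : Set V) (hXZ : Disjoint X Z)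
    (A : ι → V → V → Prop) (hA : ∀ i a b, A i a b → E a b)
    (E' : V → V → Prop) (hE' : ∀ u v, E' u v ↔ ∃ l, ZWalk E Z u v l)
    (A' : ι → V → V → Prop)
    (hA' : ∀ i u v, A' i u v ↔ ∃ l, ZWalk E Z u v l ∧ ContainsArc (A i) l)
    (h : ∀ i j : ι, i ≠ j →
      ¬ ∃ l, ClosedWalk (Del E X) l ∧ ContainsArc (A i) l ∧ ContainsArc (A j) l) :
    ∀ i j : ι, i ≠ j →
      ¬ ∃ l, ClosedWalk (Del E' X) l ∧ ContainsArc (A' i) l ∧ ContainsArc (A' j) l := by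
  rintro i j hij ⟨l, ⟨hc, hlen, hcl⟩, hi, hj⟩
  have hE'' : ∀ u v, E' u v → ∃ l, ZWalk E Z u v l := fun u v h => (hE' u v).mp h
  cases l with
  | nil => simp at hlen
  | cons u t =>
    have hhead : (u :: t).head? = some u := rfl
    have hlast : (u :: t).getLast? = some u := hcl.symm
    obtain ⟨li₁, ai, bi, li₂, heqi, habi⟩ := hi
    obtain ⟨lj₁, aj, bj, lj₂, heqj, habj⟩ := hj
    obtain ⟨mi, hmic, hmih, hmil, hmiarc⟩ := expand_walk_arc hXZ hE''
      (fun u v h => (hA' i u v).mp h) li₁ ai bi li₂ u u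
      (by rw [← heqi]; exact hc) (by rw [← heqi]; exact hhead) (by rw [← heqi]; exact hlast) habi
    obtain ⟨mj, hmjc, hmjh, hmjl, hmjarc⟩ := expand_walk_arc hXZ hE''
      (fun u v h => (hA' j u v).mp h) lj₁ aj bj lj₂ u u
      (by rw [← heqj]; exact hc) (by rw [← heqj]; exact hhead) (by rw [← heqj]; exact hlast) habj
    obtain ⟨tj, rfl⟩ : ∃ tj, mj = u :: tj := by
      cases mj with
      | nil => simp at hmjh
      | cons e tj =>
        simp only [List.head?_cons, Option.some.injEq] at hmjh
        exact ⟨tj, by rw [hmjh]⟩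
    refine h i j hij ⟨mi ++ tj, ⟨chain'_glue hmic hmjc hmil, ?_, ?_⟩,
      containsArc_append_right hmiarc, containsArc_cons_append hmil hmjarc⟩
    · have := containsArc_two_le_length hmiarc
      simp only [List.length_append]
      omega
    · rw [head?_glue (by rintro rfl; simp at hmih), getLast?_glue hmil, hmih, hmjl]
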